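/- Let G be a simple graph on the vertex set {1,…,n}. Define the marginal graphs Gⁿ,…,G¹ by Gⁿ = G and, for each k ≤ n, G^{k−1} is obtained from G^k by deleting vertex k and adding all edges between distinct vertices of Nb(k, G^k). Let Î_S be the set of pairs (j,k) with j < k and j ∉ Nb(k, G^k), and let Î_T be defined recursively over k = 2,…,n as the set of pairs (j,k) with j < k such that (j,i) ∈ Î_T for every i ∈ Nb(k, G^k). Then Î_T ⊆ Î_S. -/

import Mathlib

/-- Eliminate the vertex `k` from the graph `G`: delete all edges incident to `k`
and turn the neighborhood of `k` into a clique. -/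
def elimVertex {n : ℕ} (G : SimpleGraph (Fin n)) (k : Fin n) : SimpleGraph (Fin n) where
  Adj i j := i ≠ j ∧ i ≠ k ∧ j ≠ k ∧ (G.Adj i j ∨ (G.Adj k i ∧ G.Adj k j))
  symm := by
    constructor
    rintro i j ⟨h1, h2, h3, h4⟩
    refine ⟨h1.symm, h3, h2, ?_⟩
    rcases h4 with h | ⟨ha, hb⟩
    · exact Or.inl h.symm
    · exact Or.inr ⟨hb, ha⟩
  loopless := by constructor; rintro i ⟨h, -⟩; exact h rfl

/-- The sequence of marginal graphs: `margSeq hn G m` is the graph obtained from `G`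
after eliminating in order the (0-indexed) vertices `n-1, n-2, …, n-m`.
In the 1-indexed notation of the paper, `margSeq hn G (n-k)` is `G^k`, so that the graph
`G^k` used for vertex `k` (0-indexed vertex `k-1`) is `margSeq hn G (n-1-(k-1))`. -/
def margSeq {n : ℕ} (hn : 0 < n) (G : SimpleGraph (Fin n)) : ℕ → SimpleGraph (Fin n)
  | 0 => G
  | (m + 1) => elimVertex (margSeq hn G m) ⟨n - 1 - m, by omega⟩

/-- Given the neighborhoods `Nb k = Nb(k, G^k)` of the marginal graphs, the predicted sparsity
pattern `Î_T` of the direct transport is defined recursively: `(j,k) ∈ Î_T` iff `j < k` and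
`(j,i) ∈ Î_T` for every `i ∈ Nb k`.  (Since `Nb(k, G^k) ⊆ {1,…,k-1}` this recursion is
well-founded, and the inductive predicate below is its unique solution.) -/
inductive IhatT {n : ℕ} (Nb : Fin n → Set (Fin n)) : Fin n → Fin n → Prop where
  | mk {j k : Fin n} (hjk : j < k) (h : ∀ i ∈ Nb k, IhatT Nb j i) : IhatT Nb j k

/-- **The predicted sparsity pattern of the direct transport is contained in that of the
inverse transport:** `Î_T ⊆ Î_S`, where `Î_S = {(j,k) : j < k, j ∉ Nb(k, G^k)}`. -/
theorem IhatT_subset_IhatS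
    (n : ℕ) (hn : 0 < n) (G : SimpleGraph (Fin n)) (j k : Fin n)
    (h : IhatT (fun k => (margSeq hn G (n - 1 - (k : ℕ))).neighborSet k) j k) :
    j < k ∧ j ∉ (margSeq hn G (n - 1 - (k : ℕ))).neighborSet k := by
  obtain ⟨hjk, h2⟩ := h
  refine ⟨hjk, fun hmem => ?_⟩
  have := h2 j hmem
  cases this with
  | mk hjj _ => exact lt_irrefl j hjj
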